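/- For a fixed dataset S_m, a prior P on ℝ^d satisfying a log-Sobolev inequality with constant c_LS, a nonnegative loss with empirical risk R̂ := (1/m)Σᵢℓ(·,zᵢ) such that ℓ(·,z) ∈ H¹(P) for all z, and any γ > 0, the Gibbs posterior Q_γ with density dQ_γ(h) ∝ exp(−γR̂(h))dP(h) satisfies KL(Q_γ, P) ≤ (γ²c_LS/4) · E_{h∼Q_γ}[‖∇_h R̂(h)‖²]. -/

import Mathlib

open MeasureTheory InnerProductSpace
open scoped NNReal ENNReal

lemma measurable_gradient' {d : ℕ} (f : EuclideanSpace ℝ (Fin d) → ℝ) :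
    Measurable (gradient f) :=
  ((toDual ℝ (EuclideanSpace ℝ (Fin d))).symm.continuous.measurable).comp
    (measurable_fderiv ℝ f)

lemma hasGradientAt_const_mul_exp {d : ℕ} {R : EuclideanSpace ℝ (Fin d) → ℝ}
    {G x : EuclideanSpace ℝ (Fin d)} (h : HasGradientAt R G x) (c a : ℝ) :
    HasGradientAt (fun h => c * Real.exp (a * R h))
      ((c * Real.exp (a * R x) * a) • G) x := by
  have hF : HasFDerivAt R (toDual ℝ _ G) x := h.hasFDerivAt
  have h1 : HasFDerivAt (fun h => a * R h) (a • (toDual ℝ _ G)) x := hF.const_mul a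
  have h2 := (Real.hasDerivAt_exp (a * R x)).comp_hasFDerivAt x h1
  have h3 := h2.const_mul c
  rw [hasGradientAt_iff_hasFDerivAt, LinearIsometryEquiv.map_smul]
  convert h3 using 1
  · rfl
  · rfl
  · rw [smul_smul, smul_smul]

/-- Membership in the Sobolev space `H¹(P)`. -/
def MemH1 {d : ℕ} (P : Measure (EuclideanSpace ℝ (Fin d)))
    (f : EuclideanSpace ℝ (Fin d) → ℝ) : Prop :=
  Differentiable ℝ f ∧ MemLp f 2 P ∧ MemLp (fun h => ‖gradient f h‖) 2 P

/-- Kullback–Leibler divergence `KL(Q, P) = ∫ log (dQ/dP) dQ`. -/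
noncomputable def klDiv {d : ℕ} (Q P : Measure (EuclideanSpace ℝ (Fin d))) : ℝ :=
  ∫ h, Real.log (Q.rnDeriv P h).toReal ∂Q

/-- the Gibbs posterior `Q_γ ∝ exp(−γ R̂) P` of a log-Sobolev prior `P`
satisfies `KL(Q_γ, P) ≤ (γ² c_LS / 4) E_{Q_γ}[‖∇R̂‖²]`. -/
theorem gibbs_kl_le_gradient_norm
    {d : ℕ} {Z : Type*} [MeasurableSpace Z]
    (P : Measure (EuclideanSpace ℝ (Fin d))) [IsProbabilityMeasure P]
    (cLS : ℝ) (hcLS : 0 < cLS)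
    (hLS : ∀ f : EuclideanSpace ℝ (Fin d) → ℝ, MemH1 P f →
      ∫ h, (f h) ^ 2 * Real.log ((f h) ^ 2 / ∫ h', (f h') ^ 2 ∂P) ∂P
        ≤ cLS * ∫ h, ‖gradient f h‖ ^ 2 ∂P)
    (m : ℕ) (hm : 0 < m) (z : Fin m → Z)
    (ℓ : EuclideanSpace ℝ (Fin d) → Z → ℝ)
    (hnonneg : ∀ h z', 0 ≤ ℓ h z')
    (hH1 : ∀ z', MemH1 P (fun h => ℓ h z'))
    (Rhat : EuclideanSpace ℝ (Fin d) → ℝ)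
    (hRhat : Rhat = fun h => (1 / (m : ℝ)) * ∑ i, ℓ h (z i))
    (γ : ℝ) (hγ : 0 < γ)
    (Qγ : Measure (EuclideanSpace ℝ (Fin d)))
    (hQγ : Qγ = P.withDensity fun h =>
      ENNReal.ofReal (Real.exp (-γ * Rhat h) / ∫ h', Real.exp (-γ * Rhat h') ∂P)) :
    klDiv Qγ P ≤ (γ ^ 2 * cLS / 4) * ∫ h, ‖gradient Rhat h‖ ^ 2 ∂Qγ := by
  -- basic facts about Rhat
  have hRd : Differentiable ℝ Rhat := by
    rw [hRhat]
    exact (Differentiable.fun_sum fun i _ => (hH1 (z i)).1).const_mul _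
  have hRnn : ∀ h, 0 ≤ Rhat h := by
    intro h; rw [hRhat]
    exact mul_nonneg (by positivity) (Finset.sum_nonneg fun i _ => hnonneg h (z i))
  have hRcont : Continuous Rhat := hRd.continuous
  -- the normalizing constant
  set Zc : ℝ := ∫ h', Real.exp (-γ * Rhat h') ∂P with hZc
  have hexp_le : ∀ h : EuclideanSpace ℝ (Fin d), Real.exp (-γ * Rhat h) ≤ 1 := by
    intro h
    exact Real.exp_le_one_iff.2 (mul_nonpos_of_nonpos_of_nonneg (by linarith) (hRnn h))
  have hZint : Integrable (fun h => Real.exp (-γ * Rhat h)) P := by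
    refine Integrable.mono' (integrable_const 1)
      ((Real.continuous_exp.comp ((continuous_const.mul hRcont))).aestronglyMeasurable)
      (ae_of_all _ fun h => ?_)
    rw [Real.norm_eq_abs, abs_of_pos (Real.exp_pos _)]
    exact hexp_le h
  have hZpos : 0 < Zc := by
    rw [hZc, integral_pos_iff_support_of_nonneg (fun h => (Real.exp_pos _).le) hZint]
    have : Function.support (fun h : EuclideanSpace ℝ (Fin d) => Real.exp (-γ * Rhat h))
        = Set.univ := by
      ext h; simp [Function.support, (Real.exp_pos _).ne']
    rw [this]
    simp [measure_univ]
  -- the density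
  set g : EuclideanSpace ℝ (Fin d) → ℝ := fun h => Real.exp (-γ * Rhat h) / Zc with hgdef
  have hgpos : ∀ h, 0 < g h := fun h => div_pos (Real.exp_pos _) hZpos
  have hgcont : Continuous g := (Real.continuous_exp.comp (continuous_const.mul hRcont)).div_const _
  have hgmeas : Measurable fun h => Real.toNNReal (g h) :=
    measurable_real_toNNReal.comp hgcont.measurable
  have hQ : Qγ = P.withDensity fun h => ((Real.toNNReal (g h) : ℝ≥0) : ℝ≥0∞) := hQγ
  -- change of variables
  have hch : ∀ φ : EuclideanSpace ℝ (Fin d) → ℝ,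
      ∫ h, φ h ∂Qγ = ∫ h, g h * φ h ∂P := by
    intro φ
    rw [hQ, integral_withDensity_eq_integral_smul hgmeas φ]
    refine integral_congr_ae (ae_of_all _ fun h => ?_)
    show (g h).toNNReal • φ h = g h * φ h
    rw [NNReal.smul_def, Real.coe_toNNReal _ (hgpos h).le, smul_eq_mul]
  -- ∫ g dP = 1
  have hgint : ∫ h, g h ∂P = 1 := by
    rw [hgdef]
    simp only [integral_div]
    rw [← hZc, div_self hZpos.ne']
  -- the function f = sqrt of density
  set c : ℝ := (Real.sqrt Zc)⁻¹ with hcdef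
  set a : ℝ := -(γ / 2) with hadef
  set f : EuclideanSpace ℝ (Fin d) → ℝ := fun h => c * Real.exp (a * Rhat h) with hfdef
  have hcpos : 0 < c := inv_pos.2 (Real.sqrt_pos.2 hZpos)
  have hf2 : ∀ h, f h ^ 2 = g h := by
    intro h
    have e2 : Real.exp (a * Rhat h) ^ 2 = Real.exp (-γ * Rhat h) := by
      rw [sq, ← Real.exp_add]; congr 1; rw [hadef]; ring
    have c2 : c ^ 2 = Zc⁻¹ := by
      rw [hcdef, sq, ← mul_inv, Real.mul_self_sqrt hZpos.le]
    calc f h ^ 2 = c ^ 2 * Real.exp (a * Rhat h) ^ 2 := by rw [hfdef]; ring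
    _ = Zc⁻¹ * Real.exp (-γ * Rhat h) := by rw [e2, c2]
    _ = g h := by rw [hgdef]; simp [div_eq_mul_inv]; ring
  -- gradient of Rhat
  have hGR : ∀ x, HasGradientAt Rhat
      ((1 / (m : ℝ)) • ∑ i, gradient (fun h => ℓ h (z i)) x) x := by
    intro x
    have hs : HasFDerivAt (fun h => ∑ i, ℓ h (z i))
        (∑ i, toDual ℝ _ (gradient (fun h => ℓ h (z i)) x)) x := by
      apply HasFDerivAt.fun_sum
      intro i _
      exact ((hH1 (z i)).1 x).hasGradientAt.hasFDerivAt
    have hs2 := hs.const_mul (1 / (m : ℝ))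
    rw [hasGradientAt_iff_hasFDerivAt, LinearIsometryEquiv.map_smul, map_sum, hRhat]
    exact hs2
  have hgradR : ∀ x, gradient Rhat x
      = (1 / (m : ℝ)) • ∑ i, gradient (fun h => ℓ h (z i)) x :=
    fun x => (hGR x).gradient
  have hgradR_norm : ∀ x, ‖gradient Rhat x‖
      ≤ (1 / (m : ℝ)) * ∑ i, ‖gradient (fun h => ℓ h (z i)) x‖ := by
    intro x
    rw [hgradR x, norm_smul, Real.norm_eq_abs, abs_of_nonneg (by positivity)]
    exact mul_le_mul_of_nonneg_left (norm_sum_le _ _) (by positivity)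
  have hmemGradR : MemLp (fun h => ‖gradient Rhat h‖) 2 P := by
    have hB0 : MemLp (fun h => ∑ i, ‖gradient (fun h' => ℓ h' (z i)) h‖) 2 P := by
      exact memLp_finset_sum (μ := P) (p := 2) Finset.univ
        (f := fun (i : Fin m) (h : EuclideanSpace ℝ (Fin d)) =>
          ‖gradient (fun h' => ℓ h' (z i)) h‖)
        (fun i _ => (hH1 (z i)).2.2)
    have hB : MemLp (fun h => (1 / (m : ℝ))
        * ∑ i, ‖gradient (fun h' => ℓ h' (z i)) h‖) 2 P := hB0.const_mul _
    refine hB.of_le ((measurable_gradient' Rhat).norm).aestronglyMeasurable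
      (ae_of_all _ fun h => ?_)
    rw [Real.norm_eq_abs, abs_of_nonneg (norm_nonneg _), Real.norm_eq_abs,
      abs_of_nonneg (by positivity : (0:ℝ) ≤ (1 / (m : ℝ))
        * ∑ i, ‖gradient (fun h' => ℓ h' (z i)) h‖)]
    exact hgradR_norm h
  -- gradient of f
  have hGf : ∀ x, HasGradientAt f ((c * Real.exp (a * Rhat x) * a) • gradient Rhat x) x := by
    intro x
    rw [hfdef]
    exact hasGradientAt_const_mul_exp (hRd x).hasGradientAt c a
  have hgradf : ∀ x, gradient f x = (c * Real.exp (a * Rhat x) * a) • gradient Rhat x :=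
    fun x => (hGf x).gradient
  have hsq : ∀ x, (c * Real.exp (a * Rhat x) * a) ^ 2 = g x * (γ ^ 2 / 4) := by
    intro x
    calc (c * Real.exp (a * Rhat x) * a) ^ 2 = f x ^ 2 * a ^ 2 := by
          simp only [hfdef]; ring
      _ = g x * (γ ^ 2 / 4) := by rw [hf2 x, hadef]; ring
  have hnormf2 : ∀ x, ‖gradient f x‖ ^ 2
      = g x * ((γ ^ 2 / 4) * ‖gradient Rhat x‖ ^ 2) := by
    intro x
    rw [hgradf x, norm_smul, Real.norm_eq_abs, mul_pow, sq_abs, hsq x]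
    ring
  -- exp bound for f
  have hexp_le' : ∀ h : EuclideanSpace ℝ (Fin d), Real.exp (a * Rhat h) ≤ 1 := by
    intro h
    refine Real.exp_le_one_iff.2 (mul_nonpos_of_nonpos_of_nonneg ?_ (hRnn h))
    rw [hadef]; linarith
  -- f ∈ H¹(P)
  have hfH1 : MemH1 P f := by
    refine ⟨?_, ?_, ?_⟩
    · rw [hfdef]; exact ((hRd.const_mul a).exp).const_mul c
    · refine MemLp.of_bound ?_ c (ae_of_all _ fun h => ?_)
      · rw [hfdef]
        exact (continuous_const.mul
          (Real.continuous_exp.comp (continuous_const.mul hRcont))).aestronglyMeasurable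
      · have h1 : f h = c * Real.exp (a * Rhat h) := by rw [hfdef]
        rw [Real.norm_eq_abs, h1, abs_of_nonneg (by positivity)]
        calc c * Real.exp (a * Rhat h) ≤ c * 1 :=
              mul_le_mul_of_nonneg_left (hexp_le' h) hcpos.le
          _ = c := mul_one c
    · refine MemLp.of_le (hmemGradR.const_mul (c * (γ / 2)))
        ((measurable_gradient' f).norm.aestronglyMeasurable) (ae_of_all _ fun h => ?_)
      rw [Real.norm_eq_abs, abs_of_nonneg (norm_nonneg _), hgradf h, norm_smul,
        Real.norm_eq_abs, Real.norm_eq_abs,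
        abs_of_nonneg (by positivity : (0:ℝ) ≤ c * (γ / 2) * ‖gradient Rhat h‖)]
      have habs : |c * Real.exp (a * Rhat h) * a| = c * Real.exp (a * Rhat h) * (γ / 2) := by
        rw [abs_mul, abs_mul, abs_of_pos hcpos, abs_of_pos (Real.exp_pos _), hadef]
        rw [abs_neg, abs_of_pos (by linarith : (0:ℝ) < γ / 2)]
      rw [habs]
      have : c * Real.exp (a * Rhat h) * (γ / 2) ≤ c * (γ / 2) := by
        have h1 : c * Real.exp (a * Rhat h) ≤ c * 1 :=
          mul_le_mul_of_nonneg_left (hexp_le' h) hcpos.le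
        rw [mul_one] at h1
        exact mul_le_mul_of_nonneg_right h1 (by linarith)
      exact mul_le_mul_of_nonneg_right this (norm_nonneg _)
  -- KL divergence as an integral against P
  have hac : Qγ ≪ P := by
    rw [hQγ]; exact withDensity_absolutelyContinuous _ _
  have hrnP : Qγ.rnDeriv P =ᵐ[P] fun h => ENNReal.ofReal (g h) := by
    rw [hQγ]
    exact Measure.rnDeriv_withDensity P (ENNReal.measurable_ofReal.comp hgcont.measurable)
  have hrnQ : (fun h => Real.log (Qγ.rnDeriv P h).toReal) =ᵐ[Qγ] fun h => Real.log (g h) := by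
    filter_upwards [hac.ae_le hrnP] with h hh
    rw [hh, ENNReal.toReal_ofReal (hgpos h).le]
  have hkl : klDiv Qγ P = ∫ h, g h * Real.log (g h) ∂P := by
    rw [klDiv, integral_congr_ae hrnQ, hch]
  -- apply the log-Sobolev inequality
  have hint1 : ∫ h', f h' ^ 2 ∂P = 1 := by
    rw [← hgint]
    exact integral_congr_ae (ae_of_all _ fun h => hf2 h)
  have hmain := hLS f hfH1
  rw [hint1] at hmain
  simp only [div_one] at hmain
  have hlhs : ∫ h, f h ^ 2 * Real.log (f h ^ 2) ∂P = klDiv Qγ P := by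
    rw [hkl]
    refine integral_congr_ae (ae_of_all _ fun h => ?_)
    show f h ^ 2 * Real.log (f h ^ 2) = g h * Real.log (g h)
    rw [hf2 h]
  have hrhs : ∫ h, ‖gradient f h‖ ^ 2 ∂P
      = (γ ^ 2 / 4) * ∫ h, ‖gradient Rhat h‖ ^ 2 ∂Qγ := by
    calc ∫ h, ‖gradient f h‖ ^ 2 ∂P
        = ∫ h, g h * ((γ ^ 2 / 4) * ‖gradient Rhat h‖ ^ 2) ∂P :=
          integral_congr_ae (ae_of_all _ fun h => hnormf2 h)
      _ = ∫ h, (γ ^ 2 / 4) * ‖gradient Rhat h‖ ^ 2 ∂Qγ := (hch _).symm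
      _ = (γ ^ 2 / 4) * ∫ h, ‖gradient Rhat h‖ ^ 2 ∂Qγ := integral_const_mul _ _
  rw [hlhs, hrhs] at hmain
  calc klDiv Qγ P ≤ cLS * ((γ ^ 2 / 4) * ∫ h, ‖gradient Rhat h‖ ^ 2 ∂Qγ) := hmain
    _ = (γ ^ 2 * cLS / 4) * ∫ h, ‖gradient Rhat h‖ ^ 2 ∂Qγ := by ring
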